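/- arXiv:1710.03475 — 3 statements merged into one kernel-verified Lean document; each statement's English description precedes it below -/
import Mathlib

section
/- Let 𝒯 = ({J_1,…,J_ℓ}, T) be a tree decomposition rooted at r, let A_1,…,A_m be n×n real symmetric matrices with splittings (A_{i,j})_{j=1}^ℓ on 𝒯, and let b ∈ ℝ^m. Then the following are equivalent: (a) there exists a family (X_1,…,X_ℓ), with each X_j real symmetric positive definite indexed by J_j × J_j, such that X_i[u,v] = X_{p(i)}[u,v] for every non-root node i and all u, v ∈ J_i ∩ J_{p(i)}, and Σ_{j=1}^ℓ A_{i,j} • X_j = b_i for every i ∈ {1,…,m}; (b) there exists an n×n real symmetric positive definite matrix X with A_i • X = b_i for every i ∈ {1,…,m}. -/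
open Matrix

/-- `(J, T)` is a tree decomposition of the graph `G`:  `T` is a tree, every vertex of `G`
is covered by some bag, every edge of `G` is covered by some bag, and the bags containing any
fixed vertex satisfy the running-intersection property along paths of `T`. -/
def IsTreeDecomp {n ℓ : ℕ} (G : SimpleGraph (Fin n)) (T : SimpleGraph (Fin ℓ))
    (J : Fin ℓ → Finset (Fin n)) : Prop :=
  T.IsTree ∧
  (∀ v : Fin n, ∃ k, v ∈ J k) ∧
  (∀ u v : Fin n, G.Adj u v → ∃ k, u ∈ J k ∧ v ∈ J k) ∧
  (∀ (i j : Fin ℓ) (w : T.Walk i j), w.IsPath →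
    ∀ v : Fin n, v ∈ J i → v ∈ J j → ∀ k ∈ w.support, v ∈ J k)

/-- The principal submatrix of `X` with rows and columns in `s`. -/
def psub {n : ℕ} (X : Matrix (Fin n) (Fin n) ℝ) (s : Finset (Fin n)) :
    Matrix s s ℝ :=
  X.submatrix Subtype.val Subtype.val

/-- `p` is the parent map of the tree `T` rooted at `r`:  the root is its own parent, every
non-root node is adjacent to its parent, the parent of a non-root node lies on the (unique)
path from the node to the root, and the edges of `T` are exactly the parent-child pairs. -/
def IsRootedAt {ℓ : ℕ} (T : SimpleGraph (Fin ℓ)) (r : Fin ℓ) (p : Fin ℓ → Fin ℓ) : Prop :=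
  p r = r ∧
  (∀ j, j ≠ r → T.Adj j (p j)) ∧
  (∀ j, j ≠ r → ∀ w : T.Walk j r, w.IsPath → p j ∈ w.support) ∧
  (∀ i j, T.Adj i j ↔ ((i ≠ r ∧ p i = j) ∨ (j ≠ r ∧ p j = i)))

/-- `(Ms j)_j` is a splitting of the symmetric matrix `M` on the tree decomposition with
bags `J`:  `Σ_j Ms j • X[J j, J j] = M • X` for every symmetric `X`, where `M • N = tr(Mᵀ N)`. -/
def IsSplitting {n ℓ : ℕ} (J : Fin ℓ → Finset (Fin n)) (M : Matrix (Fin n) (Fin n) ℝ)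
    (Ms : (j : Fin ℓ) → Matrix ↥(J j) ↥(J j) ℝ) : Prop :=
  ∀ X : Matrix (Fin n) (Fin n) ℝ, X.IsSymm →
    ∑ j : Fin ℓ, Matrix.trace ((Ms j)ᵀ * psub X (J j)) = Matrix.trace (Mᵀ * X)

namespace PST
variable {n : ℕ}

lemma sum_restrict (s : Finset (Fin n)) (f : Fin n → ℝ) (hf : ∀ i ∉ s, f i = 0) :
    ∑ i, f i = ∑ i : ↥s, f i := by
  rw [Finset.sum_coe_sort s f]
  exact (Finset.sum_subset (Finset.subset_univ _) (fun x _ hx => hf x hx)).symm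

def embedM (s : Finset (Fin n)) (A : Matrix ↥s ↥s ℝ) : Matrix (Fin n) (Fin n) ℝ :=
  fun a c => if h : a ∈ s ∧ c ∈ s then A ⟨a, h.1⟩ ⟨c, h.2⟩ else 0

def indM (s : Finset (Fin n)) : Matrix (Fin n) (Fin n) ℝ :=
  Matrix.diagonal (fun i => if i ∈ s then 1 else 0)

lemma indM_mul_apply (s : Finset (Fin n)) (A : Matrix (Fin n) (Fin n) ℝ) (a c : Fin n) :
    (indM s * A) a c = if a ∈ s then A a c else 0 := by
  simp [indM, Matrix.diagonal_mul, ite_mul]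

lemma mul_indM_apply (s : Finset (Fin n)) (A : Matrix (Fin n) (Fin n) ℝ) (a c : Fin n) :
    (A * indM s) a c = if c ∈ s then A a c else 0 := by
  simp [indM, Matrix.mul_diagonal, mul_ite]

lemma indM_transpose (s : Finset (Fin n)) : (indM s)ᵀ = indM s := by
  simp [indM]

lemma embedM_apply_of_mem (s : Finset (Fin n)) (A : Matrix ↥s ↥s ℝ) {a c : Fin n}
    (ha : a ∈ s) (hc : c ∈ s) : embedM s A a c = A ⟨a, ha⟩ ⟨c, hc⟩ := by
  simp [embedM, ha, hc]

lemma embedM_apply_of_not (s : Finset (Fin n)) (A : Matrix ↥s ↥s ℝ) {a c : Fin n}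
    (h : a ∉ s ∨ c ∉ s) : embedM s A a c = 0 := by
  rw [embedM]; rw [dif_neg]; tauto

lemma embedM_mul (s : Finset (Fin n)) (A B : Matrix ↥s ↥s ℝ) :
    embedM s A * embedM s B = embedM s (A * B) := by
  ext a c
  rw [Matrix.mul_apply]
  by_cases ha : a ∈ s
  · by_cases hc : c ∈ s
    · rw [embedM_apply_of_mem s _ ha hc, Matrix.mul_apply,
        sum_restrict s _ (fun v hv => by
          rw [embedM_apply_of_not s A (Or.inr hv), zero_mul])]
      refine Finset.sum_congr rfl fun v _ => ?_
      rw [embedM_apply_of_mem s A ha v.2, embedM_apply_of_mem s B v.2 hc]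
    · rw [embedM_apply_of_not s _ (Or.inr hc)]
      refine Finset.sum_eq_zero fun v _ => ?_
      rw [embedM_apply_of_not s B (Or.inr hc), mul_zero]
  · rw [embedM_apply_of_not s _ (Or.inl ha)]
    refine Finset.sum_eq_zero fun v _ => ?_
    rw [embedM_apply_of_not s A (Or.inl ha), zero_mul]

lemma indM_apply (s : Finset (Fin n)) (a c : Fin n) :
    indM s a c = if a = c ∧ a ∈ s then 1 else 0 := by
  rw [indM, Matrix.diagonal_apply]
  by_cases hac : a = c
  · subst hac; by_cases ha : a ∈ s <;> simp [ha]
  · simp [hac]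

lemma embedM_one (s : Finset (Fin n)) : embedM s 1 = indM s := by
  ext a c
  rw [indM_apply]
  by_cases ha : a ∈ s
  · by_cases hc : c ∈ s
    · rw [embedM_apply_of_mem s _ ha hc]
      by_cases hac : a = c
      · subst hac; simp [ha]
      · rw [Matrix.one_apply_ne (fun h : (⟨a, ha⟩ : ↥s) = ⟨c, hc⟩ =>
          hac (congrArg Subtype.val h)), if_neg (fun h => hac h.1)]
    · rw [embedM_apply_of_not s _ (Or.inr hc), if_neg]
      rintro ⟨rfl, h⟩; exact hc h
  · rw [embedM_apply_of_not s _ (Or.inl ha), if_neg (fun h => ha h.2)]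

lemma embedM_transpose (s : Finset (Fin n)) (A : Matrix ↥s ↥s ℝ) :
    (embedM s A)ᵀ = embedM s Aᵀ := by
  ext a c
  by_cases ha : a ∈ s
  · by_cases hc : c ∈ s
    · rw [Matrix.transpose_apply, embedM_apply_of_mem s _ hc ha,
        embedM_apply_of_mem s _ ha hc]; rfl
    · rw [Matrix.transpose_apply, embedM_apply_of_not s _ (Or.inl hc),
        embedM_apply_of_not s _ (Or.inr hc)]
  · rw [Matrix.transpose_apply, embedM_apply_of_not s _ (Or.inr ha),
      embedM_apply_of_not s _ (Or.inl ha)]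

lemma dot_embedM (s : Finset (Fin n)) (A : Matrix ↥s ↥s ℝ) (x : Fin n → ℝ)
    (hx : ∀ i ∉ s, x i = 0) :
    x ⬝ᵥ (embedM s A) *ᵥ x = (fun i : ↥s => x i) ⬝ᵥ A *ᵥ (fun i : ↥s => x i) := by
  simp only [dotProduct, Matrix.mulVec, dotProduct]
  rw [sum_restrict s _ (fun i hi => by rw [hx i hi, zero_mul])]
  refine Finset.sum_congr rfl fun a _ => ?_
  congr 1
  rw [sum_restrict s _ (fun i hi => by
    rw [embedM_apply_of_not s A (Or.inr hi), zero_mul])]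
  refine Finset.sum_congr rfl fun c _ => ?_
  rw [embedM_apply_of_mem s A a.2 c.2]

lemma psub_embedM (s : Finset (Fin n)) (A : Matrix ↥s ↥s ℝ) : psub (embedM s A) s = A := by
  ext a c
  show embedM s A a c = A a c
  rw [embedM_apply_of_mem s A a.2 c.2]

lemma herm_iff_symm (Y : Matrix (Fin n) (Fin n) ℝ) : Y.IsHermitian ↔ Y.IsSymm := by
  rw [Matrix.IsHermitian, Matrix.conjTranspose_eq_transpose_of_trivial, Matrix.IsSymm]

/-- Positive-definiteness "supported on a subset `s`". -/
def PDOn (s : Finset (Fin n)) (Y : Matrix (Fin n) (Fin n) ℝ) : Prop :=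
  Y.IsSymm ∧ (∀ a c : Fin n, (a ∉ s ∨ c ∉ s) → Y a c = 0) ∧
    ∀ x : Fin n → ℝ, (∀ i ∉ s, x i = 0) → x ≠ 0 → 0 < x ⬝ᵥ Y *ᵥ x

lemma dot_psub (X : Matrix (Fin n) (Fin n) ℝ) (s : Finset (Fin n)) (x : Fin n → ℝ)
    (hx : ∀ i ∉ s, x i = 0) :
    x ⬝ᵥ X *ᵥ x = (fun i : ↥s => x i) ⬝ᵥ (psub X s) *ᵥ (fun i : ↥s => x i) := by
  simp only [dotProduct, Matrix.mulVec, dotProduct]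
  rw [sum_restrict s _ (fun i hi => by rw [hx i hi, zero_mul])]
  refine Finset.sum_congr rfl fun a _ => ?_
  congr 1
  rw [sum_restrict s _ (fun i hi => by rw [hx i hi, mul_zero])]
  rfl

lemma restrict_ne_zero (s : Finset (Fin n)) (x : Fin n → ℝ) (hx : ∀ i ∉ s, x i = 0)
    (hx0 : x ≠ 0) : (fun i : ↥s => x i) ≠ 0 := by
  intro h
  apply hx0
  funext i
  by_cases hi : i ∈ s
  · exact congrFun h ⟨i, hi⟩
  · exact hx i hi

lemma psub_posDef {X : Matrix (Fin n) (Fin n) ℝ} (hX : X.PosDef) (s : Finset (Fin n)) :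
    (psub X s).PosDef := by
  refine Matrix.PosDef.of_dotProduct_mulVec_pos ?_ ?_
  · exact hX.1.submatrix _
  · intro y hy
    have hstar : star y = y := funext fun i => star_trivial _
    rw [hstar]
    set x : Fin n → ℝ := fun i => if h : i ∈ s then y ⟨i, h⟩ else 0 with hxdef
    have hsupp : ∀ i ∉ s, x i = 0 := fun i hi => by simp [hxdef, hi]
    have hres : (fun i : ↥s => x i) = y := by
      funext i; simp [hxdef, i.2]
    have hx0 : x ≠ 0 := by
      intro h
      apply hy
      funext i
      rw [← hres]
      simp [h]
    have h2 := hX.dotProduct_mulVec_pos hx0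
    have hsx : star x = x := funext fun i => star_trivial _
    rw [hsx] at h2
    rwa [dot_psub X s x hsupp, hres] at h2

lemma pdOn_embedM {s : Finset (Fin n)} {A : Matrix ↥s ↥s ℝ} (hA : A.PosDef) :
    PDOn s (embedM s A) := by
  refine ⟨?_, ?_, ?_⟩
  · rw [← herm_iff_symm, Matrix.IsHermitian, Matrix.conjTranspose_eq_transpose_of_trivial,
      embedM_transpose]
    have := hA.1
    rw [Matrix.IsHermitian, Matrix.conjTranspose_eq_transpose_of_trivial] at this
    rw [this]
  · intro a c h; exact embedM_apply_of_not s A h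
  · intro x hx hx0
    rw [dot_embedM s A x hx]
    have h2 := hA.dotProduct_mulVec_pos (restrict_ne_zero s x hx hx0)
    have hsx : star (fun i : ↥s => x i) = (fun i : ↥s => x i) := funext fun i => star_trivial _
    rwa [hsx] at h2

lemma mul_col_zero {A B : Matrix (Fin n) (Fin n) ℝ} {c : Fin n} (h : ∀ v, B v c = 0) (a : Fin n) :
    (A * B) a c = 0 := by simp [Matrix.mul_apply, h]

lemma indM_mulVec_apply (s : Finset (Fin n)) (x : Fin n → ℝ) (i : Fin n) :
    (indM s *ᵥ x) i = if i ∈ s then x i else 0 := by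
  simp only [Matrix.mulVec, dotProduct]
  rw [Finset.sum_eq_single i]
  · by_cases hi : i ∈ s <;> simp [indM_apply, hi]
  · intro c _ hc
    rw [indM_apply, if_neg (fun h => hc h.1.symm), zero_mul]
  · intro h; exact absurd (Finset.mem_univ i) h

lemma mulVec_row_zero {A : Matrix (Fin n) (Fin n) ℝ} {i : Fin n} (h : ∀ c, A i c = 0)
    (x : Fin n → ℝ) : (A *ᵥ x) i = 0 := by
  simp [Matrix.mulVec, dotProduct, h]

lemma psub_posDef_of_pdOn {Y : Matrix (Fin n) (Fin n) ℝ} {S1 : Finset (Fin n)}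
    (h : PDOn S1 Y) {S : Finset (Fin n)} (hsub : S ⊆ S1) : (psub Y S).PosDef := by
  refine Matrix.PosDef.of_dotProduct_mulVec_pos ?_ ?_
  · rw [Matrix.IsHermitian, Matrix.conjTranspose_eq_transpose_of_trivial]
    ext a c
    exact congrFun (congrFun h.1 ↑a) ↑c
  · intro y hy
    have hstar : star y = y := funext fun i => star_trivial _
    rw [hstar]
    set x : Fin n → ℝ := fun i => if h : i ∈ S then y ⟨i, h⟩ else 0 with hxdef
    have hsupp : ∀ i ∉ S, x i = 0 := fun i hi => by simp [hxdef, hi]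
    have hres : (fun i : ↥S => x i) = y := by funext i; simp [hxdef, i.2]
    have hx0 : x ≠ 0 := by
      intro hc; apply hy; funext i; rw [← hres]; simp [hc]
    have h2 := h.2.2 x (fun i hi => hsupp i (fun hiS => hi (hsub hiS))) hx0
    rwa [dot_psub Y S x hsupp, hres] at h2

lemma mul_row_zero {A B : Matrix (Fin n) (Fin n) ℝ} {a : Fin n} (h : ∀ v, A a v = 0) (c : Fin n) :
    (A * B) a c = 0 := by simp [Matrix.mul_apply, h]

lemma entry_bilin (Y P Q : Matrix (Fin n) (Fin n) ℝ) (a c : Fin n) :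
    (P *ᵥ Pi.single a 1) ⬝ᵥ Y *ᵥ (Q *ᵥ Pi.single c 1) = (Pᵀ * (Y * Q)) a c := by
  have hvm : ∀ (A : Matrix (Fin n) (Fin n) ℝ) (v : Fin n → ℝ), v ᵥ* A = Aᵀ *ᵥ v := by
    intro A v
    have h := Matrix.vecMul_transpose Aᵀ v
    rwa [Matrix.transpose_transpose] at h
  have h2 : ∀ (A : Matrix (Fin n) (Fin n) ℝ) (v : Fin n), A *ᵥ Pi.single v 1 = fun i => A i v := by
    intro A v; funext i
    simp [Matrix.mulVec, dotProduct, Pi.single_apply]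
  rw [Matrix.mulVec_mulVec, Matrix.dotProduct_mulVec, hvm, Matrix.mulVec_mulVec, h2]
  simp only [dotProduct, Pi.single_apply, mul_ite, mul_one, mul_zero,
    Finset.sum_ite_eq', Finset.mem_univ, if_true]
  rw [← Matrix.transpose_transpose P, ← Matrix.transpose_mul, Matrix.transpose_apply,
    Matrix.transpose_transpose]

lemma bil_ss (Y : Matrix (Fin n) (Fin n) ℝ) (a c : Fin n) :
    Pi.single a 1 ⬝ᵥ Y *ᵥ Pi.single c 1 = Y a c := by
  rw [← Matrix.one_mulVec (Pi.single a 1), ← Matrix.one_mulVec (Pi.single c 1), entry_bilin]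
  simp

lemma bil_sv (Y Q : Matrix (Fin n) (Fin n) ℝ) (a c : Fin n) :
    Pi.single a 1 ⬝ᵥ Y *ᵥ (Q *ᵥ Pi.single c 1) = (Y * Q) a c := by
  rw [← Matrix.one_mulVec (Pi.single a 1), entry_bilin]
  simp

lemma bil_vs (Y P : Matrix (Fin n) (Fin n) ℝ) (a c : Fin n) :
    (P *ᵥ Pi.single a 1) ⬝ᵥ Y *ᵥ Pi.single c 1 = (Pᵀ * Y) a c := by
  rw [← Matrix.one_mulVec (Pi.single c 1), entry_bilin]
  simp

lemma quad_congr (Y C : Matrix (Fin n) (Fin n) ℝ) (x : Fin n → ℝ) :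
    x ⬝ᵥ (Cᵀ * Y * C) *ᵥ x = (C *ᵥ x) ⬝ᵥ Y *ᵥ (C *ᵥ x) := by
  rw [← Matrix.mulVec_mulVec, ← Matrix.mulVec_mulVec, Matrix.dotProduct_mulVec x Cᵀ _,
    Matrix.vecMul_transpose]

lemma glue {S1 S2 : Finset (Fin n)} {Y1 Y2 : Matrix (Fin n) (Fin n) ℝ}
    (h1 : PDOn S1 Y1) (h2 : PDOn S2 Y2)
    (hagree : ∀ a c : Fin n, a ∈ S1 → a ∈ S2 → c ∈ S1 → c ∈ S2 → Y1 a c = Y2 a c) :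
    ∃ Z : Matrix (Fin n) (Fin n) ℝ, PDOn (S1 ∪ S2) Z ∧
      (∀ a c, a ∈ S1 → c ∈ S1 → Z a c = Y1 a c) ∧
      (∀ a c, a ∈ S2 → c ∈ S2 → Z a c = Y2 a c) := by
  classical
  obtain ⟨h1s, h1supp, h1pos⟩ := h1
  obtain ⟨h2s, h2supp, h2pos⟩ := h2
  set S : Finset (Fin n) := S1 ∩ S2 with hS
  set U : Finset (Fin n) := S1 \ S2 with hU
  set W : Finset (Fin n) := S2 \ S1 with hW
  have hSsub1 : ∀ {i : Fin n}, i ∈ S → i ∈ S1 := fun h => (Finset.mem_inter.1 h).1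
  have hSsub2 : ∀ {i : Fin n}, i ∈ S → i ∈ S2 := fun h => (Finset.mem_inter.1 h).2
  have hUsub : ∀ {i : Fin n}, i ∈ U → i ∈ S1 := fun h => (Finset.mem_sdiff.1 h).1
  have hWsub : ∀ {i : Fin n}, i ∈ W → i ∈ S2 := fun h => (Finset.mem_sdiff.1 h).1
  have hWnS : ∀ {i : Fin n}, i ∈ W → i ∉ S := fun h hs => (Finset.mem_sdiff.1 h).2 (hSsub1 hs)
  have hUnS2 : ∀ {i : Fin n}, i ∈ U → i ∉ S2 := fun h => (Finset.mem_sdiff.1 h).2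
  have hWnS1 : ∀ {i : Fin n}, i ∈ W → i ∉ S1 := fun h => (Finset.mem_sdiff.1 h).2
  set B : Matrix ↥S ↥S ℝ := psub Y1 S with hB
  have hBpd : B.PosDef := psub_posDef_of_pdOn ⟨h1s, h1supp, h1pos⟩ (Finset.inter_subset_left)
  have hBdet : IsUnit B.det := isUnit_iff_ne_zero.mpr (ne_of_gt hBpd.det_pos)
  set K : Matrix (Fin n) (Fin n) ℝ := embedM S B⁻¹ with hK
  set M : Matrix (Fin n) (Fin n) ℝ := embedM S B with hM
  have hMK : M * K = indM S := by rw [hM, hK, embedM_mul, Matrix.mul_nonsing_inv _ hBdet, embedM_one]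
  have hKM : K * M = indM S := by rw [hM, hK, embedM_mul, Matrix.nonsing_inv_mul _ hBdet, embedM_one]
  have hBsymm : Bᵀ = B := by
    ext a c
    exact congrFun (congrFun h1s ↑a) ↑c
  have hKsymm : Kᵀ = K := by
    rw [hK, embedM_transpose]
    congr 1
    rw [Matrix.transpose_nonsing_inv, hBsymm]
  have hMsymm : Mᵀ = M := by rw [hM, embedM_transpose, hBsymm]
  -- support identities
  have hY1l : indM S1 * Y1 = Y1 := by
    ext a c; rw [indM_mul_apply]
    by_cases ha : a ∈ S1
    · rw [if_pos ha]
    · rw [if_neg ha, h1supp a c (Or.inl ha)]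
  have hY1r : Y1 * indM S1 = Y1 := by
    ext a c; rw [mul_indM_apply]
    by_cases hc : c ∈ S1
    · rw [if_pos hc]
    · rw [if_neg hc, h1supp a c (Or.inr hc)]
  have hY2l : indM S2 * Y2 = Y2 := by
    ext a c; rw [indM_mul_apply]
    by_cases ha : a ∈ S2
    · rw [if_pos ha]
    · rw [if_neg ha, h2supp a c (Or.inl ha)]
  have hY2r : Y2 * indM S2 = Y2 := by
    ext a c; rw [mul_indM_apply]
    by_cases hc : c ∈ S2
    · rw [if_pos hc]
    · rw [if_neg hc, h2supp a c (Or.inr hc)]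
  have hKl : indM S * K = K := by
    ext a c; rw [indM_mul_apply]
    by_cases ha : a ∈ S
    · rw [if_pos ha]
    · rw [if_neg ha, hK, embedM_apply_of_not S _ (Or.inl ha)]
  have hKr : K * indM S = K := by
    ext a c; rw [mul_indM_apply]
    by_cases hc : c ∈ S
    · rw [if_pos hc]
    · rw [if_neg hc, hK, embedM_apply_of_not S _ (Or.inr hc)]
  have hMS1 : indM S * Y1 * indM S = M := by
    ext a c; rw [mul_indM_apply, hM]
    by_cases hc : c ∈ S
    · rw [if_pos hc, indM_mul_apply]
      by_cases ha : a ∈ S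
      · rw [if_pos ha, embedM_apply_of_mem S _ ha hc]; rfl
      · rw [if_neg ha, embedM_apply_of_not S _ (Or.inl ha)]
    · rw [if_neg hc, embedM_apply_of_not S _ (Or.inr hc)]
  have hMS2 : indM S * Y2 * indM S = M := by
    ext a c; rw [mul_indM_apply, hM]
    by_cases hc : c ∈ S
    · rw [if_pos hc, indM_mul_apply]
      by_cases ha : a ∈ S
      · rw [if_pos ha, embedM_apply_of_mem S _ ha hc]
        exact (hagree a c (hSsub1 ha) (hSsub2 ha) (hSsub1 hc) (hSsub2 hc)).symm
      · rw [if_neg ha, embedM_apply_of_not S _ (Or.inl ha)]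
    · rw [if_neg hc, embedM_apply_of_not S _ (Or.inr hc)]
  have hdec1 : indM S1 = indM S + indM U := by
    ext a c
    rw [Matrix.add_apply, indM_apply, indM_apply, indM_apply]
    by_cases hac : a = c
    · subst hac
      by_cases ha : a ∈ S1
      · by_cases ha2 : a ∈ S2
        · rw [if_pos ⟨rfl, ha⟩, if_pos ⟨rfl, Finset.mem_inter.2 ⟨ha, ha2⟩⟩,
            if_neg (fun h => (Finset.mem_sdiff.1 h.2).2 ha2)]
          norm_num
        · rw [if_pos ⟨rfl, ha⟩, if_neg (fun h => ha2 (Finset.mem_inter.1 h.2).2),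
            if_pos ⟨rfl, Finset.mem_sdiff.2 ⟨ha, ha2⟩⟩]
          norm_num
      · rw [if_neg (fun h => ha h.2), if_neg (fun h => ha (Finset.mem_inter.1 h.2).1),
          if_neg (fun h => ha (Finset.mem_sdiff.1 h.2).1)]
        norm_num
    · rw [if_neg (fun h => hac h.1), if_neg (fun h => hac h.1), if_neg (fun h => hac h.1)]
      norm_num
  have hdec2 : indM S2 = indM S + indM W := by
    ext a c
    rw [Matrix.add_apply, indM_apply, indM_apply, indM_apply]
    by_cases hac : a = c
    · subst hac
      by_cases ha : a ∈ S2
      · by_cases ha1 : a ∈ S1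
        · rw [if_pos ⟨rfl, ha⟩, if_pos ⟨rfl, Finset.mem_inter.2 ⟨ha1, ha⟩⟩,
            if_neg (fun h => (Finset.mem_sdiff.1 h.2).2 ha1)]
          norm_num
        · rw [if_pos ⟨rfl, ha⟩, if_neg (fun h => ha1 (Finset.mem_inter.1 h.2).1),
            if_pos ⟨rfl, Finset.mem_sdiff.2 ⟨ha, ha1⟩⟩]
          norm_num
      · rw [if_neg (fun h => ha h.2), if_neg (fun h => ha (Finset.mem_inter.1 h.2).2),
          if_neg (fun h => ha (Finset.mem_sdiff.1 h.2).1)]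
        norm_num
    · rw [if_neg (fun h => hac h.1), if_neg (fun h => hac h.1), if_neg (fun h => hac h.1)]
      norm_num
  -- key contracted identities
  have hKY1K : K * Y1 * K = K := by
    have e : K * Y1 * K = (K * indM S) * Y1 * (indM S * K) := by rw [hKr, hKl]
    rw [e]
    have e2 : (K * indM S) * Y1 * (indM S * K) = K * (indM S * Y1 * indM S) * K := by
      simp only [Matrix.mul_assoc]
    rw [e2, hMS1]
    have e3 : K * M * K = (K * M) * K := rfl
    rw [e3, hKM, hKl]
  have hKY2K : K * Y2 * K = K := by
    have e : K * Y2 * K = (K * indM S) * Y2 * (indM S * K) := by rw [hKr, hKl]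
    rw [e]
    have e2 : (K * indM S) * Y2 * (indM S * K) = K * (indM S * Y2 * indM S) * K := by
      simp only [Matrix.mul_assoc]
    rw [e2, hMS2]
    have e3 : K * M * K = (K * M) * K := rfl
    rw [e3, hKM, hKl]
  have hSY1K : indM S * Y1 * K = indM S := by
    have e : indM S * Y1 * K = indM S * Y1 * (indM S * K) := by rw [hKl]
    rw [e]
    have e2 : indM S * Y1 * (indM S * K) = (indM S * Y1 * indM S) * K := by
      simp only [Matrix.mul_assoc]
    rw [e2, hMS1, hMK]
  have hKY1S : K * Y1 * indM S = indM S := by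
    have e : K * Y1 * indM S = (K * indM S) * Y1 * indM S := by rw [hKr]
    rw [e]
    have e2 : (K * indM S) * Y1 * indM S = K * (indM S * Y1 * indM S) := by
      simp only [Matrix.mul_assoc]
    rw [e2, hMS1, hKM]
  have idA : indM S * (Y1 * (K * Y2)) = indM S * Y2 := by
    have e : indM S * (Y1 * (K * Y2)) = (indM S * Y1 * K) * Y2 := by
      simp only [Matrix.mul_assoc]
    rw [e, hSY1K]
  have idB : Y2 * K * Y1 * indM S = Y2 * indM S := by
    have e : Y2 * K * Y1 * indM S = Y2 * (K * Y1 * indM S) := by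
      simp only [Matrix.mul_assoc]
    rw [e, hKY1S]
  have id3 : Y2 * K * (Y1 * (K * Y2)) = Y2 * (K * Y2) := by
    have e : Y2 * K * (Y1 * (K * Y2)) = Y2 * (K * Y1 * K) * Y2 := by
      simp only [Matrix.mul_assoc]
    rw [e, hKY1K]
    simp only [Matrix.mul_assoc]
  have id4 : Y2 * K * (Y2 * (K * Y2)) = Y2 * (K * Y2) := by
    have e : Y2 * K * (Y2 * (K * Y2)) = Y2 * (K * Y2 * K) * Y2 := by
      simp only [Matrix.mul_assoc]
    rw [e, hKY2K]
    simp only [Matrix.mul_assoc]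
  have hKY2T : (K * Y2)ᵀ = Y2 * K := by rw [Matrix.transpose_mul, hKsymm, h2s]
  -- the glued matrix
  set C1 : Matrix (Fin n) (Fin n) ℝ := indM S1 + K * (Y2 * indM W) with hC1
  set C2 : Matrix (Fin n) (Fin n) ℝ := indM W - K * (Y2 * indM W) with hC2
  set Z : Matrix (Fin n) (Fin n) ℝ := C1ᵀ * Y1 * C1 + C2ᵀ * Y2 * C2 with hZ
  -- column structure
  have hWcol : ∀ (s : Finset (Fin n)) (c : Fin n),
      indM s *ᵥ Pi.single c 1 = if c ∈ s then Pi.single c 1 else 0 := by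
    intro s c
    funext i
    rw [indM_mulVec_apply]
    by_cases hic : i = c
    · subst hic
      by_cases hi : i ∈ s <;> simp [hi]
    · by_cases hi : i ∈ s <;> by_cases hc : c ∈ s <;>
        simp [hi, hc, Pi.single_apply, hic]
  have hKcol : ∀ c : Fin n, (K * (Y2 * indM W)) *ᵥ Pi.single c 1 =
      if c ∈ W then (K * Y2) *ᵥ Pi.single c 1 else 0 := by
    intro c
    have e : K * (Y2 * indM W) = (K * Y2) * indM W := by simp only [Matrix.mul_assoc]
    rw [e, ← Matrix.mulVec_mulVec, hWcol]
    by_cases hc : c ∈ W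
    · rw [if_pos hc, if_pos hc]
    · rw [if_neg hc, if_neg hc, Matrix.mulVec_zero]
  have hC1col : ∀ c : Fin n, C1 *ᵥ Pi.single c 1 =
      (if c ∈ S1 then Pi.single c 1 else 0) +
        (if c ∈ W then (K * Y2) *ᵥ Pi.single c 1 else 0) := by
    intro c
    rw [hC1, Matrix.add_mulVec, hWcol, hKcol]
  have hC2col : ∀ c : Fin n, C2 *ᵥ Pi.single c 1 =
      (if c ∈ W then Pi.single c 1 - (K * Y2) *ᵥ Pi.single c 1 else 0) := by
    intro c
    rw [hC2, Matrix.sub_mulVec, hWcol, hKcol]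
    by_cases hc : c ∈ W
    · rw [if_pos hc, if_pos hc, if_pos hc]
    · rw [if_neg hc, if_neg hc, if_neg hc, sub_zero]
  have hZentry : ∀ a c : Fin n, Z a c =
      (C1 *ᵥ Pi.single a 1) ⬝ᵥ Y1 *ᵥ (C1 *ᵥ Pi.single c 1) +
        (C2 *ᵥ Pi.single a 1) ⬝ᵥ Y2 *ᵥ (C2 *ᵥ Pi.single c 1) := by
    intro a c
    rw [entry_bilin, entry_bilin, hZ, Matrix.add_apply]
    simp only [Matrix.mul_assoc]
  -- the three entry computations
  have hres1 : ∀ a c : Fin n, a ∈ S1 → c ∈ S1 → Z a c = Y1 a c := by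
    intro a c ha hc
    rw [hZentry, hC1col, hC1col, hC2col, hC2col,
      if_pos ha, if_pos hc, if_neg (fun h => hWnS1 h ha), if_neg (fun h => hWnS1 h hc),
      if_neg (fun h => hWnS1 h ha), if_neg (fun h => hWnS1 h hc)]
    simp only [add_zero, zero_add, Matrix.mulVec_zero, zero_dotProduct,
      dotProduct_zero]
    rw [bil_ss]
  have hres2 : ∀ a c : Fin n, a ∈ S2 → c ∈ S2 → Z a c = Y2 a c := by
    intro a c ha hc
    have hmem : ∀ {i : Fin n}, i ∈ S2 → i ∈ S ∨ i ∈ W := by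
      intro i hi
      by_cases h1 : i ∈ S1
      · exact Or.inl (Finset.mem_inter.2 ⟨h1, hi⟩)
      · exact Or.inr (Finset.mem_sdiff.2 ⟨hi, h1⟩)
    rcases hmem ha with haS | haW <;> rcases hmem hc with hcS | hcW
    · rw [hZentry, hC1col, hC1col, hC2col, hC2col,
        if_pos (hSsub1 haS), if_pos (hSsub1 hcS),
        if_neg (fun h => hWnS h haS), if_neg (fun h => hWnS h hcS),
        if_neg (fun h => hWnS h haS), if_neg (fun h => hWnS h hcS)]
      simp only [add_zero, zero_add, Matrix.mulVec_zero, zero_dotProduct,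
        dotProduct_zero]
      rw [bil_ss]
      exact hagree a c (hSsub1 haS) (hSsub2 haS) (hSsub1 hcS) (hSsub2 hcS)
    · rw [hZentry, hC1col, hC1col, hC2col, hC2col,
        if_pos (hSsub1 haS), if_neg (hWnS1 hcW),
        if_neg (fun h => hWnS h haS), if_pos hcW,
        if_neg (fun h => hWnS h haS), if_pos hcW]
      simp only [add_zero, zero_add, Matrix.mulVec_zero, zero_dotProduct,
        dotProduct_zero]
      rw [bil_sv]
      have e := congrFun (congrFun idA a) c
      rw [indM_mul_apply, indM_mul_apply, if_pos haS, if_pos haS] at e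
      exact e
    · rw [hZentry, hC1col, hC1col, hC2col, hC2col,
        if_neg (hWnS1 haW), if_pos (hSsub1 hcS),
        if_pos haW, if_neg (fun h => hWnS h hcS),
        if_pos haW, if_neg (fun h => hWnS h hcS)]
      simp only [add_zero, zero_add, Matrix.mulVec_zero, zero_dotProduct,
        dotProduct_zero]
      rw [bil_vs, hKY2T]
      have e := congrFun (congrFun idB a) c
      rw [mul_indM_apply, mul_indM_apply, if_pos hcS, if_pos hcS] at e
      exact e
    · rw [hZentry, hC1col, hC1col, hC2col, hC2col,
        if_neg (hWnS1 haW), if_neg (hWnS1 hcW),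
        if_pos haW, if_pos hcW, if_pos haW, if_pos hcW]
      simp only [add_zero, zero_add]
      rw [Matrix.mulVec_sub, dotProduct_sub, sub_dotProduct,
        sub_dotProduct]
      rw [entry_bilin, bil_ss, bil_sv, bil_vs, entry_bilin, hKY2T]
      have e1 : (Y2 * K * (Y1 * (K * Y2))) a c = (Y2 * (K * Y2)) a c := by rw [id3]
      have e2 : (Y2 * K * (Y2 * (K * Y2))) a c = (Y2 * (K * Y2)) a c := by rw [id4]
      have e3 : (Y2 * K * Y2) a c = (Y2 * (K * Y2)) a c := by rw [Matrix.mul_assoc]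
      rw [e1, e2, e3]
      ring
  have hZsupp : ∀ a c : Fin n, (a ∉ S1 ∪ S2 ∨ c ∉ S1 ∪ S2) → Z a c = 0 := by
    have hcol0 : ∀ i : Fin n, i ∉ S1 ∪ S2 →
        C1 *ᵥ Pi.single i 1 = 0 ∧ C2 *ᵥ Pi.single i 1 = 0 := by
      intro i hi
      have hi1 : i ∉ S1 := fun h => hi (Finset.mem_union_left _ h)
      have hi2 : i ∉ S2 := fun h => hi (Finset.mem_union_right _ h)
      have hiW : i ∉ W := fun h => hi2 (hWsub h)
      constructor
      · rw [hC1col, if_neg hi1, if_neg hiW, add_zero]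
      · rw [hC2col, if_neg hiW]
    intro a c h
    rcases h with h | h
    · obtain ⟨e1, e2⟩ := hcol0 a h
      rw [hZentry, e1, e2, zero_dotProduct, zero_dotProduct, add_zero]
    · obtain ⟨e1, e2⟩ := hcol0 c h
      rw [hZentry, e1, e2, Matrix.mulVec_zero, Matrix.mulVec_zero,
        dotProduct_zero, dotProduct_zero, add_zero]
  have hZsymm : Z.IsSymm := by
    rw [Matrix.IsSymm, hZ]
    simp only [Matrix.transpose_add, Matrix.transpose_mul, Matrix.transpose_transpose,
      h1s.eq, h2s.eq, Matrix.mul_assoc]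
  -- positivity
  have hquad : ∀ x : Fin n → ℝ, x ⬝ᵥ Z *ᵥ x =
      (C1 *ᵥ x) ⬝ᵥ Y1 *ᵥ (C1 *ᵥ x) + (C2 *ᵥ x) ⬝ᵥ Y2 *ᵥ (C2 *ᵥ x) := by
    intro x
    rw [hZ, Matrix.add_mulVec, dotProduct_add, quad_congr, quad_congr]
  have hKrow0 : ∀ i : Fin n, i ∉ S → ∀ x : Fin n → ℝ, ((K * (Y2 * indM W)) *ᵥ x) i = 0 := by
    intro i hi x
    apply mulVec_row_zero
    intro c
    apply mul_row_zero
    intro v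
    rw [hK]
    exact embedM_apply_of_not S _ (Or.inl hi)
  have hZpos : ∀ x : Fin n → ℝ, (∀ i ∉ S1 ∪ S2, x i = 0) → x ≠ 0 → 0 < x ⬝ᵥ Z *ᵥ x := by
    intro x hx hx0
    rw [hquad]
    set y1 : Fin n → ℝ := C1 *ᵥ x with hy1
    set y2 : Fin n → ℝ := C2 *ᵥ x with hy2
    have hy1supp : ∀ i ∉ S1, y1 i = 0 := by
      intro i hi
      rw [hy1, hC1, Matrix.add_mulVec, Pi.add_apply, indM_mulVec_apply, if_neg hi,
        hKrow0 i (fun h => hi (hSsub1 h)) x, add_zero]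
    have hy2supp : ∀ i ∉ S2, y2 i = 0 := by
      intro i hi
      rw [hy2, hC2, Matrix.sub_mulVec, Pi.sub_apply, indM_mulVec_apply,
        if_neg (fun h => hi (hWsub h)), hKrow0 i (fun h => hi (hSsub2 h)) x, sub_zero]
    by_cases hy10 : y1 = 0
    · have hy20 : y2 ≠ 0 := by
        intro hy2z
        apply hx0
        have hxW : ∀ i ∈ W, x i = 0 := by
          intro i hiW
          have h := congrFun hy2z i
          rw [hy2, hC2, Matrix.sub_mulVec, Pi.sub_apply, indM_mulVec_apply, if_pos hiW,
            hKrow0 i (hWnS hiW) x, sub_zero] at h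
          exact h
        have hWx : indM W *ᵥ x = 0 := by
          funext i
          rw [indM_mulVec_apply]
          by_cases hiW : i ∈ W
          · rw [if_pos hiW]; exact hxW i hiW
          · rw [if_neg hiW]; rfl
        have hKx : (K * (Y2 * indM W)) *ᵥ x = 0 := by
          have e : K * (Y2 * indM W) = (K * Y2) * indM W := by simp only [Matrix.mul_assoc]
          rw [e, ← Matrix.mulVec_mulVec, hWx, Matrix.mulVec_zero]
        have hS1x : ∀ i ∈ S1, x i = 0 := by
          intro i hiS1
          have h := congrFun hy10 i
          rw [hy1, hC1, Matrix.add_mulVec, Pi.add_apply, indM_mulVec_apply, if_pos hiS1,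
            hKx] at h
          simpa using h
        funext i
        by_cases hiS1 : i ∈ S1
        · exact hS1x i hiS1
        · by_cases hiS2 : i ∈ S2
          · exact hxW i (Finset.mem_sdiff.2 ⟨hiS2, hiS1⟩)
          · exact hx i (fun h => (Finset.mem_union.1 h).elim hiS1 hiS2)
      have t2 : 0 < y2 ⬝ᵥ Y2 *ᵥ y2 := h2pos y2 hy2supp hy20
      rw [hy10]
      simp only [Matrix.mulVec_zero, dotProduct_zero, zero_dotProduct, zero_add]
      exact t2
    · have t1 : 0 < y1 ⬝ᵥ Y1 *ᵥ y1 := h1pos y1 hy1supp hy10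
      by_cases hy20 : y2 = 0
      · rw [hy20]
        simp only [Matrix.mulVec_zero, dotProduct_zero, add_zero]
        exact t1
      · have t2 : 0 < y2 ⬝ᵥ Y2 *ᵥ y2 := h2pos y2 hy2supp hy20
        linarith
  exact ⟨Z, ⟨hZsymm, hZsupp, hZpos⟩, hres1, hres2⟩

section Tree
variable {ℓ : ℕ} {T : SimpleGraph (Fin ℓ)} {r : Fin ℓ} {p : Fin ℓ → Fin ℓ}

lemma dist_parent_lt (hT : T.IsTree) (hroot : IsRootedAt T r p) {j : Fin ℓ} (hj : j ≠ r) :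
    T.dist (p j) r < T.dist j r := by
  classical
  obtain ⟨w, hw⟩ := hT.isConnected.exists_walk_length_eq_dist j r
  set w' := w.bypass with hw'
  have hp' : w'.IsPath := w.bypass_isPath
  have hlen : w'.length = T.dist j r :=
    le_antisymm (hw ▸ w.length_bypass_le) (SimpleGraph.dist_le w')
  have hmem : p j ∈ w'.support := hroot.2.2.1 j hj w' hp'
  have hsplit := w'.take_spec hmem
  have hlens := congrArg SimpleGraph.Walk.length hsplit
  rw [SimpleGraph.Walk.length_append] at hlens
  have hd : T.dist (p j) r ≤ (w'.dropUntil (p j) hmem).length :=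
    SimpleGraph.dist_le _
  have htake : (w'.takeUntil (p j) hmem).length ≠ 0 := by
    intro h0
    exact (hroot.2.1 j hj).ne' ((w'.takeUntil (p j) hmem).eq_of_length_eq_zero h0).symm
  omega

lemma exists_next (hT : T.IsTree) (hroot : IsRootedAt T r p) {F : Finset (Fin ℓ)}
    (hr : r ∈ F) (hne : F ≠ Finset.univ) : ∃ j, j ∉ F ∧ p j ∈ F := by
  classical
  obtain ⟨j0, hj0⟩ : ∃ j, j ∉ F := by
    by_contra h
    push_neg at h
    exact hne (Finset.eq_univ_iff_forall.2 h)
  obtain ⟨j, hjmem, hjmin⟩ := Finset.exists_min_image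
    (Finset.univ.filter (fun i => i ∉ F)) (fun i => T.dist i r)
    ⟨j0, by simp [hj0]⟩
  have hj : j ∉ F := (Finset.mem_filter.1 hjmem).2
  have hjr : j ≠ r := fun h => hj (h ▸ hr)
  refine ⟨j, hj, ?_⟩
  by_contra hpj
  have := hjmin (p j) (by simp [hpj])
  exact absurd this (not_le.2 (dist_parent_lt hT hroot hjr))

lemma parent_on_path (hroot : IsRootedAt T r p) {F : Finset (Fin ℓ)}
    (hclosed : ∀ i ∈ F, i ≠ r → p i ∈ F) :
    ∀ {j k : Fin ℓ} (w : T.Walk j k), w.IsPath → j ∉ F → k ∈ F → p j ∈ w.support := by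
  intro j k w
  induction w with
  | nil => exact fun _ hj hk => absurd hk hj
  | @cons j u k h w' ih =>
    intro hp hj hk
    rcases (hroot.2.2.2 j u).1 h with ⟨hjr, hpj⟩ | ⟨hur, hpu⟩
    · rw [SimpleGraph.Walk.support_cons, hpj]
      exact List.mem_cons_of_mem _ w'.start_mem_support
    · by_cases huF : u ∈ F
      · exact absurd (hpu ▸ hclosed u huF hur) hj
      · have hmem := ih (SimpleGraph.Walk.IsPath.of_cons hp) huF hk
        rw [hpu] at hmem
        exact absurd hmem ((SimpleGraph.Walk.cons_isPath_iff h w').1 hp).2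

end Tree
section Main
variable {n ℓ : ℕ} {G : SimpleGraph (Fin n)} {T : SimpleGraph (Fin ℓ)}
  {J : Fin ℓ → Finset (Fin n)} {r : Fin ℓ} {p : Fin ℓ → Fin ℓ}

lemma build (hTD : IsTreeDecomp G T J) (hroot : IsRootedAt T r p)
    (X : (j : Fin ℓ) → Matrix ↥(J j) ↥(J j) ℝ) (hXpd : ∀ j, (X j).PosDef)
    (hXagree : ∀ i : Fin ℓ, i ≠ r → ∀ (a c : Fin n) (hai : a ∈ J i) (hci : c ∈ J i)
      (hap : a ∈ J (p i)) (hcp : c ∈ J (p i)),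
      X i ⟨a, hai⟩ ⟨c, hci⟩ = X (p i) ⟨a, hap⟩ ⟨c, hcp⟩) :
    ∀ t : ℕ, ∃ F : Finset (Fin ℓ), r ∈ F ∧ (∀ i ∈ F, i ≠ r → p i ∈ F) ∧
      min (t + 1) ℓ ≤ F.card ∧
      ∃ Z, PDOn (F.biUnion J) Z ∧
        ∀ k ∈ F, ∀ (a c : Fin n) (ha : a ∈ J k) (hc : c ∈ J k),
          Z a c = X k ⟨a, ha⟩ ⟨c, hc⟩ := by
  intro t
  induction t with
  | zero =>
    refine ⟨{r}, Finset.mem_singleton_self r, ?_, ?_, embedM (J r) (X r), ?_, ?_⟩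
    · intro i hi hir; exact absurd (Finset.mem_singleton.1 hi) hir
    · rw [Finset.card_singleton]; exact min_le_left _ _
    · rw [Finset.singleton_biUnion]; exact pdOn_embedM (hXpd r)
    · intro k hk a c ha hc
      rw [Finset.mem_singleton] at hk; subst hk
      exact embedM_apply_of_mem _ _ ha hc
  | succ t iht =>
    obtain ⟨F, hrF, hclosed, hcard, Z, hZpd, hZagr⟩ := iht
    by_cases hFu : F = Finset.univ
    · refine ⟨F, hrF, hclosed, ?_, Z, hZpd, hZagr⟩
      subst hFu
      rw [Finset.card_univ, Fintype.card_fin]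
      exact min_le_right _ _
    · obtain ⟨j, hjF, hpjF⟩ := exists_next hTD.1 hroot hrF hFu
      have hjr : j ≠ r := fun h => hjF (h ▸ hrF)
      have hoverlap : ∀ v : Fin n, v ∈ F.biUnion J → v ∈ J j → v ∈ J (p j) := by
        intro v hv hvj
        obtain ⟨k, hkF, hvk⟩ := Finset.mem_biUnion.1 hv
        obtain ⟨w⟩ := hTD.1.isConnected j k
        have hpmem := parent_on_path hroot hclosed w.bypass w.bypass_isPath hjF hkF
        exact hTD.2.2.2 j k w.bypass w.bypass_isPath v hvj hvk (p j) hpmem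
      obtain ⟨Z', hZ'pd, hZ'res1, hZ'res2⟩ := glue hZpd (pdOn_embedM (hXpd j)) (by
        intro a c ha1 ha2 hc1 hc2
        have hap : a ∈ J (p j) := hoverlap a ha1 ha2
        have hcp : c ∈ J (p j) := hoverlap c hc1 hc2
        rw [embedM_apply_of_mem _ _ ha2 hc2, hXagree j hjr a c ha2 hc2 hap hcp]
        exact hZagr (p j) hpjF a c hap hcp)
      refine ⟨insert j F, Finset.mem_insert_of_mem hrF, ?_, ?_, Z', ?_, ?_⟩
      · intro i hi hir
        rcases Finset.mem_insert.1 hi with rfl | hiF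
        · exact Finset.mem_insert_of_mem hpjF
        · exact Finset.mem_insert_of_mem (hclosed i hiF hir)
      · rw [Finset.card_insert_of_notMem hjF]
        have hlt : F.card < ℓ := by
          have := Finset.card_lt_card (Finset.ssubset_univ_iff.2 hFu)
          simpa [Finset.card_univ] using this
        omega
      · rw [Finset.biUnion_insert, Finset.union_comm]
        exact hZ'pd
      · intro k hk a c ha hc
        rcases Finset.mem_insert.1 hk with rfl | hkF
        · rw [hZ'res2 a c ha hc, embedM_apply_of_mem _ _ ha hc]
        · rw [hZ'res1 a c (Finset.mem_biUnion.2 ⟨k, hkF, ha⟩)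
            (Finset.mem_biUnion.2 ⟨k, hkF, hc⟩)]
          exact hZagr k hkF a c ha hc

end Main
end PST

open PST

/-- primal Slater condition transfers:  there is a family of positive
definite matrices `X j` agreeing on the overlaps along tree edges and satisfying the split
constraints `Σ_j As i j • X j = b i`, iff there is a positive definite `X` with
`A i • X = b i` for all `i`. -/
theorem primal_slater_transfer {n ℓ m : ℕ}
    (G : SimpleGraph (Fin n)) (T : SimpleGraph (Fin ℓ))
    (J : Fin ℓ → Finset (Fin n)) (hTD : IsTreeDecomp G T J)
    (r : Fin ℓ) (p : Fin ℓ → Fin ℓ) (hroot : IsRootedAt T r p)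
    (A : Fin m → Matrix (Fin n) (Fin n) ℝ) (hAsymm : ∀ i, (A i).IsSymm)
    (hsparse : ∀ (i : Fin m) (a c : Fin n), A i a c ≠ 0 → a = c ∨ G.Adj a c)
    (As : (i : Fin m) → (j : Fin ℓ) → Matrix ↥(J j) ↥(J j) ℝ)
    (hAssymm : ∀ i j, (As i j).IsSymm)
    (hsplit : ∀ i, IsSplitting J (A i) (As i))
    (b : Fin m → ℝ) :
    (∃ X : (j : Fin ℓ) → Matrix ↥(J j) ↥(J j) ℝ,
        (∀ j, (X j).PosDef) ∧
        (∀ i : Fin ℓ, i ≠ r →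
          ∀ (a c : Fin n) (hai : a ∈ J i) (hci : c ∈ J i)
            (hap : a ∈ J (p i)) (hcp : c ∈ J (p i)),
            X i ⟨a, hai⟩ ⟨c, hci⟩ = X (p i) ⟨a, hap⟩ ⟨c, hcp⟩) ∧
        (∀ i : Fin m, ∑ j : Fin ℓ, Matrix.trace ((As i j)ᵀ * X j) = b i)) ↔
      (∃ X : Matrix (Fin n) (Fin n) ℝ, X.PosDef ∧
        ∀ i : Fin m, Matrix.trace ((A i)ᵀ * X) = b i) := by
  constructor
  · rintro ⟨X, hXpd, hXagree, hXcon⟩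
    obtain ⟨F, hrF, hclosed, hcard, Z, hZpd, hZagr⟩ :=
      build hTD hroot X hXpd hXagree ℓ
    have hFu : F = Finset.univ := by
      apply Finset.eq_univ_of_card
      rw [Fintype.card_fin]
      refine le_antisymm ?_ ?_
      · simpa [Finset.card_univ] using Finset.card_le_univ F
      · calc ℓ = min (ℓ + 1) ℓ := (min_eq_right (Nat.le_succ ℓ)).symm
          _ ≤ F.card := hcard
    have hUniv : F.biUnion J = Finset.univ := by
      apply Finset.eq_univ_iff_forall.2
      intro v
      obtain ⟨k, hk⟩ := hTD.2.1 v
      exact Finset.mem_biUnion.2 ⟨k, by rw [hFu]; exact Finset.mem_univ k, hk⟩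
    have hmemF : ∀ k : Fin ℓ, k ∈ F := fun k => by rw [hFu]; exact Finset.mem_univ k
    have hpsub : ∀ k : Fin ℓ, psub Z (J k) = X k := by
      intro k
      ext a c
      exact hZagr k (hmemF k) a.1 c.1 a.2 c.2
    refine ⟨Z, Matrix.PosDef.of_dotProduct_mulVec_pos ?_ ?_, ?_⟩
    · exact (herm_iff_symm Z).2 hZpd.1
    · intro x hx0
      have hsx : star x = x := funext fun i => star_trivial _
      rw [hsx]
      exact hZpd.2.2 x (fun i hi => absurd (by rw [hUniv]; exact Finset.mem_univ i) hi) hx0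
    · intro i
      have hsym : Z.IsSymm := hZpd.1
      rw [← hsplit i Z hsym, ← hXcon i]
      refine Finset.sum_congr rfl fun k _ => ?_
      rw [hpsub k]
  · rintro ⟨X, hXpd, hXcon⟩
    refine ⟨fun j => psub X (J j), fun j => psub_posDef hXpd (J j), ?_, ?_⟩
    · intro i hi a c hai hci hap hcp; rfl
    · intro i
      have hXsymm : X.IsSymm := (herm_iff_symm X).1 hXpd.1
      exact (hsplit i X hXsymm).trans (hXcon i)
end

section
/- Let d = d_1 + ⋯ + d_n with each d_k ≥ 1, and partition {1,…,d} into consecutive intervals I_1,…,I_n of sizes d_1,…,d_n, in increasing order. Let T be a tree on {1,…,n} such that every node j < n has a parent p(j) with p(j) > j (i.e., the identity ordering is topological, with root n). Let H be a d×d real symmetric positive definite matrix such that H[I_i,I_j] = 0 (the zero block) whenever i ≠ j and (i,j) ∉ E(T). Then there exists a d×d lower-triangular matrix L with strictly positive diagonal entries such that L·Lᵀ = H and, for all i > j, if the block L[I_i,I_j] is nonzero then the block H[I_i,I_j] is nonzero (in particular (i,j) ∈ E(T)); i.e., the Cholesky factorization incurs no block fill. -/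
open Matrix

set_option maxHeartbeats 1000000 in
lemma cholesky_exists {d : ℕ} (H : Matrix (Fin d) (Fin d) ℝ) (hH : H.PosDef) :
    ∃ L : Matrix (Fin d) (Fin d) ℝ,
      (∀ k k' : Fin d, k < k' → L k k' = 0) ∧ (∀ k : Fin d, 0 < L k k) ∧ L * Lᵀ = H := by
  haveI : @WellFoundedLT (Fin d) (@Preorder.toLT _ (@PartialOrder.toPreorder _
      (@LinearOrder.toPartialOrder _ Fin.instLinearOrder))) := Finite.to_wellFoundedLT
  letI : DecidableEq (Fin d) := instDecidableEqFin d
  haveI := LDL.invertibleLowerInv hH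
  have hdnn : ∀ i, 0 ≤ LDL.diagEntries hH i := by
    intro i
    have h := hH.posSemidef.dotProduct_mulVec_nonneg (LDL.lowerInv hH i)
    simpa [LDL.diagEntries, PiLp.inner_apply, RCLike.inner_apply, dotProduct,
      mulVec, star_trivial, mul_comm] using h
  have hlowtri : ∀ i j : Fin d, i < j → LDL.lower hH i j = 0 := by
    have h1 : (LDL.lowerInv hH).BlockTriangular OrderDual.toDual := fun i j hij =>
      LDL.lowerInv_triangular hH hij
    have h2 := blockTriangular_inv_of_blockTriangular h1
    intro i j hij
    have h3 : LDL.lower hH = (LDL.lowerInv hH)⁻¹ := rfl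
    rw [h3]
    exact h2 hij
  set D : Matrix (Fin d) (Fin d) ℝ :=
    Matrix.diagonal (fun i => Real.sqrt (LDL.diagEntries hH i)) with hD
  set L₀ : Matrix (Fin d) (Fin d) ℝ := LDL.lower hH * D with hL₀
  have hL₀tri : ∀ k k' : Fin d, k < k' → L₀ k k' = 0 := by
    intro k k' hkk'
    rw [hL₀, hD, Matrix.mul_diagonal, hlowtri k k' hkk', zero_mul]
  have hDD : D * D = LDL.diag hH := by
    have he : (fun i => Real.sqrt (LDL.diagEntries hH i) * Real.sqrt (LDL.diagEntries hH i))
        = LDL.diagEntries hH := funext fun i => Real.mul_self_sqrt (hdnn i)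
    rw [hD, Matrix.diagonal_mul_diagonal, he, LDL.diag]
  have hfac0 : L₀ * L₀ᵀ = H := by
    have hct : (LDL.lower hH)ᴴ = (LDL.lower hH)ᵀ := by
      ext i j; simp [conjTranspose_apply]
    have step1 : L₀ * L₀ᵀ = LDL.lower hH * (D * D) * (LDL.lower hH)ᵀ := by
      rw [hL₀, transpose_mul, diagonal_transpose]
      simp only [Matrix.mul_assoc]
      rfl
    rw [step1, hDD, ← hct]
    exact LDL.lower_conj_diag hH
  have hdet : L₀.det ≠ 0 := by
    intro h0
    have h1 : H.det = 0 := by rw [← hfac0, det_mul, h0, zero_mul]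
    exact (ne_of_gt hH.det_pos) h1
  have hdiagne : ∀ k, L₀ k k ≠ 0 := by
    intro k hk
    apply hdet
    rw [Matrix.det_of_lowerTriangular L₀ (fun i j hij => hL₀tri i j hij)]
    exact Finset.prod_eq_zero (Finset.mem_univ k) hk
  set s : Fin d → ℝ := fun k => if 0 < L₀ k k then 1 else -1 with hs
  have hss : Matrix.diagonal s * Matrix.diagonal s = 1 := by
    rw [Matrix.diagonal_mul_diagonal]
    have : (fun i => s i * s i) = fun _ => (1 : ℝ) := by
      funext k; rw [hs]; by_cases h : 0 < L₀ k k <;> simp [h]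
    rw [this, Matrix.diagonal_one]
  refine ⟨L₀ * Matrix.diagonal s, ?_, ?_, ?_⟩
  · intro k k' hkk'
    rw [Matrix.mul_diagonal, hL₀tri k k' hkk', zero_mul]
  · intro k
    rw [Matrix.mul_diagonal, hs]
    rcases lt_or_gt_of_ne (hdiagne k) with h | h
    · simp only [not_lt.2 h.le, if_neg, if_false]
      nlinarith
    · simp [h]
  · have step1 : L₀ * Matrix.diagonal s * (L₀ * Matrix.diagonal s)ᵀ
        = L₀ * (Matrix.diagonal s * Matrix.diagonal s) * L₀ᵀ := by
      rw [transpose_mul, diagonal_transpose]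
      simp only [Matrix.mul_assoc]
    rw [step1, hss, Matrix.mul_one, hfac0]

/-- block Cholesky factorization with no block fill.
The index set `{1,…,d}` is partitioned into consecutive intervals `I j = β⁻¹(j)` (encoded by
a monotone surjective block-assignment map `β : Fin d → Fin n`); `T` is a tree on the blocks
whose edges are exactly the parent-child pairs of the parent map `p`, and every non-root
block `j` (i.e. `j + 1 < n`, the root being the last block) satisfies `j < p j`, so the
identity ordering is topological.  If `H` is positive definite with vanishing off-diagonal
blocks away from the edges of `T`, then `H = L Lᵀ` for a lower-triangular `L` with strictly
positive diagonal whose strictly-lower blocks are nonzero only where the corresponding block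
of `H` is nonzero (in particular only on edges of `T`). -/
theorem block_cholesky_no_fill {d n : ℕ}
    (β : Fin d → Fin n) (hmono : Monotone β) (hsurj : Function.Surjective β)
    (T : SimpleGraph (Fin n)) (hT : T.IsTree)
    (p : Fin n → Fin n)
    (hproot : ∀ j : Fin n, ¬ ((j : ℕ) + 1 < n) → p j = j)
    (hplt : ∀ j : Fin n, (j : ℕ) + 1 < n → j < p j)
    (hadj : ∀ i j : Fin n, T.Adj i j ↔
      (((i : ℕ) + 1 < n ∧ p i = j) ∨ ((j : ℕ) + 1 < n ∧ p j = i)))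
    (H : Matrix (Fin d) (Fin d) ℝ) (hH : H.PosDef)
    (hHsparse : ∀ k k' : Fin d, β k ≠ β k' → ¬ T.Adj (β k) (β k') → H k k' = 0) :
    ∃ L : Matrix (Fin d) (Fin d) ℝ,
      (∀ k k' : Fin d, k < k' → L k k' = 0) ∧
      (∀ k : Fin d, 0 < L k k) ∧
      L * Lᵀ = H ∧
      ∀ i j : Fin n, j < i →
        (∃ a b : Fin d, β a = i ∧ β b = j ∧ L a b ≠ 0) →
        ((∃ a b : Fin d, β a = i ∧ β b = j ∧ H a b ≠ 0) ∧ T.Adj i j) := by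
  obtain ⟨L, hlow, hdiag, hfac⟩ := cholesky_exists H hH
  -- the parent of the lower endpoint of an edge is the upper endpoint
  have padj : ∀ x y : Fin n, T.Adj x y → y < x → p y = x := by
    intro x y ha hlt
    rcases (hadj x y).1 ha with ⟨hx, hpx⟩ | ⟨_, hpy⟩
    · exact absurd (hplt x hx) (by rw [hpx]; exact not_lt.2 hlt.le)
    · exact hpy
  -- entrywise expansion of the factorization
  have hentry : ∀ k j : Fin d, H k j =
      (∑ m ∈ Finset.Iio j, L k m * L j m) + L k j * L j j := by
    intro k j
    have h1 : H k j = ∑ m, L k m * L j m := by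
      rw [← hfac, Matrix.mul_apply]
      simp [Matrix.transpose_apply]
    have h2 : ∑ m ∈ Finset.Iic j, L k m * L j m = ∑ m, L k m * L j m := by
      apply Finset.sum_subset (Finset.subset_univ _)
      intro m _ hm
      rw [hlow j m (by simpa using hm), mul_zero]
    rw [h1, ← h2, ← Finset.Iio_insert, Finset.sum_insert (by simp), add_comm]
  -- the key no-fill induction
  have main : ∀ N : ℕ, ∀ j k : Fin d, (j : ℕ) < N → β j < β k →
      (∀ a b : Fin d, β a = β k → β b = β j → H a b = 0) → L k j = 0 := by
    intro N
    induction N with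
    | zero => intro j k h; omega
    | succ N IH =>
      intro j k hjN hβ hzero
      have hHkj : H k j = 0 := hzero k j rfl rfl
      have hterms : ∀ m ∈ Finset.Iio j, L k m * L j m = 0 := by
        intro m hm
        have hmj : m < j := Finset.mem_Iio.1 hm
        by_contra hne
        have hLkm : L k m ≠ 0 := fun h => hne (by rw [h, zero_mul])
        have hLjm : L j m ≠ 0 := fun h => hne (by rw [h, mul_zero])
        have hmN : (m : ℕ) < N := by
          have h1 : (m : ℕ) < (j : ℕ) := hmj
          omega
        have hβm_le : β m ≤ β j := hmono hmj.le
        have hβmk : β m < β k := lt_of_le_of_lt hβm_le hβ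
        -- from `L k m ≠ 0`, the block `(β k, β m)` of `H` is nonzero
        have hex1 : ∃ a b : Fin d, β a = β k ∧ β b = β m ∧ H a b ≠ 0 := by
          by_contra hc
          push_neg at hc
          exact hLkm (IH m k hmN hβmk (fun a b ha hb => hc a b ha hb))
        obtain ⟨a, b, ha, hb, hHab⟩ := hex1
        have hadj1 : T.Adj (β k) (β m) := by
          by_contra hna
          refine hHab (hHsparse a b ?_ ?_)
          · rw [ha, hb]; exact hβmk.ne'
          · rw [ha, hb]; exact hna
        have hp1 : p (β m) = β k := padj _ _ hadj1 hβmk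
        rcases lt_or_eq_of_le hβm_le with hβmj | hβmj
        · -- `β m < β j` : the block `(β j, β m)` of `H` is also nonzero, forcing
          -- `p (β m) = β j ≠ β k`, a contradiction
          have hex2 : ∃ a b : Fin d, β a = β j ∧ β b = β m ∧ H a b ≠ 0 := by
            by_contra hc
            push_neg at hc
            exact hLjm (IH m j hmN hβmj (fun a b ha hb => hc a b ha hb))
          obtain ⟨a2, b2, ha2, hb2, hHab2⟩ := hex2
          have hadj2 : T.Adj (β j) (β m) := by
            by_contra hna
            refine hHab2 (hHsparse a2 b2 ?_ ?_)
            · rw [ha2, hb2]; exact hβmj.ne'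
            · rw [ha2, hb2]; exact hna
          have hp2 : p (β m) = β j := padj _ _ hadj2 hβmj
          exact (ne_of_gt hβ) (hp1 ▸ hp2)
        · -- `β m = β j` : then the block `(β k, β j)` of `H` is nonzero, contradiction
          exact hHab (hzero a b ha (hb.trans hβmj))
      have hkey := hentry k j
      rw [hHkj, Finset.sum_eq_zero hterms, zero_add] at hkey
      rcases mul_eq_zero.1 hkey.symm with h | h
      · exact h
      · exact absurd h (ne_of_gt (hdiag j))
  refine ⟨L, hlow, hdiag, hfac, ?_⟩
  rintro i j hji ⟨a, b, ha, hb, hLab⟩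
  have hex : ∃ a' b' : Fin d, β a' = i ∧ β b' = j ∧ H a' b' ≠ 0 := by
    by_contra hc
    push_neg at hc
    refine hLab (main ((b : ℕ) + 1) b a (Nat.lt_succ_self _) ?_ ?_)
    · rw [ha, hb]; exact hji
    · intro x y hx hy
      exact hc x y (hx.trans ha) (hy.trans hb)
  obtain ⟨a', b', ha', hb', hH'⟩ := hex
  refine ⟨⟨a', b', ha', hb', hH'⟩, ?_⟩
  by_contra hna
  refine hH' (hHsparse a' b' ?_ ?_)
  · rw [ha', hb']; exact hji.ne'
  · rw [ha', hb']; exact hna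
end

section
/- Let 𝒯 = ({J_1,…,J_ℓ}, T) be a tree decomposition of a graph G on n vertices, and let ω = max_j |J_j|. Suppose X_1,…,X_ℓ are real symmetric positive semidefinite matrices, with X_j indexed by J_j × J_j, such that for every edge (i,j) ∈ E(T): X_i[u,v] = X_j[u,v] for all u, v ∈ J_i ∩ J_j. Then there exists a real n×ω matrix U such that the positive semidefinite matrix X = U·Uᵀ satisfies X[J_j,J_j] = X_j for every j ∈ {1,…,ℓ}; in particular there is a positive semidefinite completion of rank at most ω. -/
open Matrix

open scoped RealInnerProductSpace

noncomputable section

private lemma gram_exists {ι : Type*} [Fintype ι] [DecidableEq ι] {m : ℕ}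
    (hcard : Fintype.card ι ≤ m) (A : Matrix ι ι ℝ) (hA : A.PosSemidef) :
    ∃ w : ι → EuclideanSpace ℝ (Fin m), ∀ a b, ⟪w a, w b⟫ = A a b := by
  obtain ⟨B, hB⟩ : ∃ B : Matrix ι ι ℝ, A = Bᴴ * B := by
    open scoped MatrixOrder in
    obtain ⟨B, hB⟩ := CStarAlgebra.nonneg_iff_eq_star_mul_self.mp hA.nonneg
    exact ⟨B, hB⟩
  let e : ι ↪ Fin m := (Fintype.equivFin ι).toEmbedding.trans (Fin.castLEEmb hcard)
  have hsingle : ∀ (c d : ι),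
      ⟪(EuclideanSpace.single (e c) (1:ℝ) : EuclideanSpace ℝ (Fin m)),
        EuclideanSpace.single (e d) (1:ℝ)⟫ = if c = d then 1 else 0 := by
    intro c d
    rw [EuclideanSpace.inner_single_left]
    simp [EuclideanSpace.single_apply, e.injective.eq_iff, eq_comm]
  refine ⟨fun a => ∑ c, B c a • EuclideanSpace.single (e c) (1:ℝ), fun a b => ?_⟩
  rw [hB]
  rw [sum_inner]
  simp only [inner_sum, real_inner_smul_left, real_inner_smul_right, hsingle]
  simp [Matrix.mul_apply, Matrix.conjTranspose_apply, mul_ite, Finset.sum_ite_eq,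
    mul_comm]

private lemma gram_extend {ι : Type*} [Fintype ι] [DecidableEq ι] {m : ℕ}
    (hcard : Fintype.card ι ≤ m) (A : Matrix ι ι ℝ) (hA : A.PosSemidef)
    (t : Finset ι) (g : ι → EuclideanSpace ℝ (Fin m))
    (hg : ∀ a ∈ t, ∀ b ∈ t, ⟪g a, g b⟫ = A a b) :
    ∃ f : ι → EuclideanSpace ℝ (Fin m),
      (∀ a b, ⟪f a, f b⟫ = A a b) ∧ ∀ a ∈ t, f a = g a := by
  obtain ⟨w, hw⟩ := gram_exists hcard A hA
  let Lw : (↥t → ℝ) →ₗ[ℝ] EuclideanSpace ℝ (Fin m) :=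
    Fintype.linearCombination ℝ (fun a : ↥t => w a)
  let Lg : (↥t → ℝ) →ₗ[ℝ] EuclideanSpace ℝ (Fin m) :=
    Fintype.linearCombination ℝ (fun a : ↥t => g a)
  have hdouble : ∀ (v : ↥t → EuclideanSpace ℝ (Fin m)) (c d : ↥t → ℝ),
      ⟪∑ i, c i • v i, ∑ i, d i • v i⟫ = ∑ i, ∑ k, (c i * d k) * ⟪v i, v k⟫ := by
    intro v c d
    rw [sum_inner]
    simp only [inner_sum, real_inner_smul_left, real_inner_smul_right]
    exact Finset.sum_congr rfl fun i _ => Finset.sum_congr rfl fun k _ => by ring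
  have hinner : ∀ c d : ↥t → ℝ, ⟪Lw c, Lw d⟫ = ⟪Lg c, Lg d⟫ := by
    intro c d
    simp only [Lw, Lg, Fintype.linearCombination_apply]
    rw [hdouble, hdouble]
    refine Finset.sum_congr rfl fun i _ => Finset.sum_congr rfl fun k _ => ?_
    rw [hw, hg _ i.2 _ k.2]
  have hker : LinearMap.ker Lw ≤ LinearMap.ker Lg := by
    intro c hc
    rw [LinearMap.mem_ker] at hc ⊢
    have h0 : ⟪Lg c, Lg c⟫ = 0 := by rw [← hinner, hc, inner_zero_left]
    exact inner_self_eq_zero.mp h0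
  let ψ : ↥(LinearMap.range Lw) →ₗ[ℝ] EuclideanSpace ℝ (Fin m) :=
    ((LinearMap.ker Lw).liftQ Lg hker) ∘ₗ (LinearMap.quotKerEquivRange Lw).symm.toLinearMap
  have hψ : ∀ c : ↥t → ℝ, ψ ⟨Lw c, LinearMap.mem_range_self _ c⟩ = Lg c := by
    intro c
    have h2 : (LinearMap.quotKerEquivRange Lw).symm ⟨Lw c, LinearMap.mem_range_self _ c⟩
        = Submodule.Quotient.mk c := by
      rw [LinearEquiv.symm_apply_eq]
      exact Subtype.ext (LinearMap.quotKerEquivRange_apply_mk Lw c).symm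
    simp only [ψ, LinearMap.coe_comp, LinearEquiv.coe_coe, Function.comp_apply, h2,
      Submodule.liftQ_apply]
  have hψinner : ∀ x y : ↥(LinearMap.range Lw), ⟪ψ x, ψ y⟫ = ⟪x, y⟫ := by
    rintro ⟨-, c, rfl⟩ ⟨-, d, rfl⟩
    rw [Submodule.coe_inner]
    have h1 := hψ c
    have h2 := hψ d
    rw [h1, h2, hinner]
  let ψᵢ : ↥(LinearMap.range Lw) →ₗᵢ[ℝ] EuclideanSpace ℝ (Fin m) :=
    ψ.isometryOfInner hψinner
  let Φ := ψᵢ.extend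
  refine ⟨fun a => Φ (w a), fun a b => ?_, fun a ha => ?_⟩
  · rw [Φ.inner_map_map]; exact hw a b
  · have hwa : w a = Lw (Pi.single (⟨a, ha⟩ : ↥t) 1) := by
      simp [Lw, Fintype.linearCombination_apply_single]
    have hmem : w a ∈ LinearMap.range Lw := hwa ▸ LinearMap.mem_range_self _ _
    have hcoe : w a = ((⟨Lw (Pi.single (⟨a, ha⟩ : ↥t) 1),
        LinearMap.mem_range_self _ _⟩ : ↥(LinearMap.range Lw)) : EuclideanSpace ℝ (Fin m)) :=
      hwa
    show Φ (w a) = g a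
    rw [hcoe, LinearIsometry.extend_apply]
    have : ψᵢ ⟨Lw (Pi.single (⟨a, ha⟩ : ↥t) 1), LinearMap.mem_range_self _ _⟩
        = Lg (Pi.single (⟨a, ha⟩ : ↥t) 1) := by
      show ψ _ = _
      exact hψ _
    rw [this]
    simp [Lg, Fintype.linearCombination_apply_single]

end

/-- low-rank positive semidefinite completion:  if the positive
semidefinite matrices `X j`, indexed by `J j × J j`, agree on their common indices along
every edge of the tree `T`, then with `ω = max_j |J j|` there is an `n × ω` matrix `U`
such that the positive semidefinite matrix `X = U Uᵀ` satisfies `X[J j, J j] = X j` for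
every `j`; in particular there is a positive semidefinite completion of rank at most `ω`. -/
theorem low_rank_completion {n ℓ : ℕ}
    (G : SimpleGraph (Fin n)) (T : SimpleGraph (Fin ℓ))
    (J : Fin ℓ → Finset (Fin n)) (hTD : IsTreeDecomp G T J)
    (X : (j : Fin ℓ) → Matrix ↥(J j) ↥(J j) ℝ) (hXpsd : ∀ j, (X j).PosSemidef)
    (hagree : ∀ i j : Fin ℓ, T.Adj i j →
      ∀ (u v : Fin n) (hui : u ∈ J i) (hvi : v ∈ J i) (huj : u ∈ J j) (hvj : v ∈ J j),
        X i ⟨u, hui⟩ ⟨v, hvi⟩ = X j ⟨u, huj⟩ ⟨v, hvj⟩) :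
    ∃ U : Matrix (Fin n) (Fin (Finset.univ.sup fun j : Fin ℓ => (J j).card)) ℝ,
      (U * Uᵀ).PosSemidef ∧ ∀ j : Fin ℓ, psub (U * Uᵀ) (J j) = X j := by
  classical
  obtain ⟨hTree, hvert, hedge, hri⟩ := hTD
  set ω := Finset.univ.sup (fun j : Fin ℓ => (J j).card) with hωdef
  have hne : Nonempty (Fin ℓ) := hTree.isConnected.nonempty
  obtain ⟨r⟩ := hne
  let p : ∀ k, T.Walk r k := fun k => ((hTree.isConnected.preconnected r k).some).bypass
  have hp : ∀ k, (p k).IsPath := fun k => SimpleGraph.Walk.bypass_isPath _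
  have huniq : ∀ {a b : Fin ℓ} (q q' : T.Walk a b), q.IsPath → q'.IsPath → q = q' :=
    fun q q' hq hq' => ((hTree.existsUnique_path _ _).unique hq hq')
  let L : Fin ℓ → ℕ := fun k => (p k).length
  have htake : ∀ (k x : Fin ℓ) (hx : x ∈ (p k).support), p x = (p k).takeUntil x hx :=
    fun k x hx => huniq _ _ (hp x) ((hp k).takeUntil hx)
  have hLle : ∀ (k x : Fin ℓ), x ∈ (p k).support → L x ≤ L k := by
    intro k x hx
    show (p x).length ≤ (p k).length
    rw [htake k x hx]
    exact SimpleGraph.Walk.length_takeUntil_le _ hx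
  have hLlt : ∀ (k x : Fin ℓ), x ∈ (p k).support → x ≠ k → L x < L k := by
    intro k x hx hxk
    have h1 := SimpleGraph.Walk.take_spec (p k) hx
    have h2 : L k = ((p k).takeUntil x hx).length + ((p k).dropUntil x hx).length := by
      show (p k).length = _
      rw [← SimpleGraph.Walk.length_append, h1]
    have h3 : ((p k).dropUntil x hx).length ≠ 0 :=
      fun h0 => hxk (SimpleGraph.Walk.eq_of_length_eq_zero h0)
    have h4 : L x = ((p k).takeUntil x hx).length := by
      show (p x).length = _; rw [htake k x hx]
    omega
  have hLr : L r = 0 := by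
    show (p r).length = 0
    rw [show p r = SimpleGraph.Walk.nil from huniq _ _ (hp r) SimpleGraph.Walk.IsPath.nil]
    rfl
  have hparent : ∀ j, j ≠ r → ∃ (i : Fin ℓ) (hij : T.Adj i j), p j = (p i).concat hij := by
    intro j hjr
    have hnotnil : ¬ (p j).reverse.Nil := by
      rw [SimpleGraph.Walk.nil_iff_length_eq, SimpleGraph.Walk.length_reverse]
      intro h0
      exact hjr (SimpleGraph.Walk.eq_of_length_eq_zero h0).symm
    obtain ⟨x, hjx, q, hq⟩ := SimpleGraph.Walk.not_nil_iff.mp hnotnil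
    have hqpath : q.IsPath := by
      have h := (hp j).reverse
      rw [hq] at h
      exact h.of_cons
    have hpx : p x = q.reverse := huniq _ _ (hp x) hqpath.reverse
    refine ⟨x, hjx.symm, ?_⟩
    have h5 := congrArg SimpleGraph.Walk.reverse hq
    rw [SimpleGraph.Walk.reverse_reverse] at h5
    rw [h5, SimpleGraph.Walk.reverse_cons, hpx, SimpleGraph.Walk.concat_eq_append]
  have hlast : ∀ (jj i x : Fin ℓ) (hij : T.Adj i jj) (hxj : T.Adj x jj),
      p jj = (p i).concat hij → jj ∉ (p x).support → x = i := by
    intro jj i x hij hxj hconcat hjnot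
    have hq1 : ((p x).concat hxj).IsPath := by
      rw [← SimpleGraph.Walk.reverse_reverse ((p x).concat hxj)]
      apply SimpleGraph.Walk.IsPath.reverse
      rw [SimpleGraph.Walk.reverse_concat, SimpleGraph.Walk.cons_isPath_iff]
      exact ⟨(hp x).reverse, by rwa [SimpleGraph.Walk.support_reverse, List.mem_reverse]⟩
    have heq : (p x).concat hxj = (p i).concat hij := by
      rw [← hconcat]; exact huniq _ _ hq1 (hp jj)
    have h6 := congrArg (fun (wk : T.Walk r jj) => wk.reverse.getVert 1) heq
    simpa only [SimpleGraph.Walk.reverse_concat, SimpleGraph.Walk.getVert_cons_succ,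
      SimpleGraph.Walk.getVert_zero] using h6
  have main : ∀ (m : ℕ) (S : Finset (Fin ℓ)),
      S.card ≤ m → (∀ k ∈ S, ∀ x ∈ (p k).support, x ∈ S) →
      ∃ f : Fin n → EuclideanSpace ℝ (Fin ω),
        ∀ j ∈ S, ∀ (u v : Fin n) (hu : u ∈ J j) (hv : v ∈ J j),
          ⟪f u, f v⟫ = X j ⟨u, hu⟩ ⟨v, hv⟩ := by
    intro m
    induction m with
    | zero =>
      intro S hcard _
      have hS : S = ∅ := Finset.card_eq_zero.mp (Nat.le_zero.mp hcard)
      subst hS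
      exact ⟨0, by simp⟩
    | succ m ih =>
      intro S hcard hclosed
      rcases S.eq_empty_or_nonempty with rfl | hSne
      · exact ⟨0, by simp⟩
      obtain ⟨j, hjS, hmax⟩ := S.exists_max_image L hSne
      set S' := S.erase j with hS'def
      have hcard' : S'.card ≤ m := by
        rw [hS'def, Finset.card_erase_of_mem hjS]; omega
      have hclosed' : ∀ k ∈ S', ∀ x ∈ (p k).support, x ∈ S' := by
        intro k hk x hx
        have hkj : k ≠ j := (Finset.mem_erase.mp hk).1
        have hkS : k ∈ S := (Finset.mem_erase.mp hk).2
        have hxS : x ∈ S := hclosed k hkS x hx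
        rw [Finset.mem_erase]
        refine ⟨?_, hxS⟩
        rintro rfl
        exact absurd (hmax k hkS) (Nat.not_le.mpr (hLlt k x hx (Ne.symm hkj)))
      obtain ⟨f', hf'⟩ := ih S' hcard' hclosed'
      set t : Finset ↥(J j) :=
        Finset.univ.filter (fun a : ↥(J j) => ∃ k ∈ S', (a : Fin n) ∈ J k) with htdef
      have hcardJ : Fintype.card ↥(J j) ≤ ω := by
        rw [Fintype.card_coe, hωdef]
        exact Finset.le_sup (f := fun j : Fin ℓ => (J j).card) (Finset.mem_univ j)
      have hgram : ∀ a ∈ t, ∀ b ∈ t,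
          ⟪f' (a : Fin n), f' (b : Fin n)⟫ = X j a b := by
        intro a ha b hb
        obtain ⟨k, hkS', hak⟩ := (Finset.mem_filter.mp ha).2
        obtain ⟨k', hk'S', hbk'⟩ := (Finset.mem_filter.mp hb).2
        have hjr : j ≠ r := by
          rintro rfl
          have h7 : L k ≤ 0 := hLr ▸ hmax k (Finset.mem_of_mem_erase hkS')
          have h8 : k = j := (SimpleGraph.Walk.eq_of_length_eq_zero
            (Nat.le_zero.mp h7)).symm
          exact (Finset.mem_erase.mp hkS').1 h8
        obtain ⟨i, hij, hconcat⟩ := hparent j hjr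
        have hiS' : i ∈ S' := by
          have hisupp : i ∈ (p j).support := by
            rw [hconcat, SimpleGraph.Walk.support_concat]
            simp [SimpleGraph.Walk.end_mem_support]
          exact Finset.mem_erase.mpr ⟨hij.ne, hclosed j hjS i hisupp⟩
        have claim : ∀ (v : Fin n) (k : Fin ℓ), k ∈ S' → v ∈ J k → v ∈ J j → v ∈ J i := by
          intro v k hkS'2 hvk hvj
          have hkS := Finset.mem_of_mem_erase hkS'2
          have hkj : k ≠ j := (Finset.mem_erase.mp hkS'2).1
          set P := ((p k).reverse.append (p j)).bypass with hPdef
          have hPpath : P.IsPath := SimpleGraph.Walk.bypass_isPath _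
          have hPsupp : ∀ x ∈ P.support, x ∈ (p k).support ∨ x ∈ (p j).support := by
            intro x hx
            have h9 := SimpleGraph.Walk.support_bypass_subset _ hx
            rw [SimpleGraph.Walk.mem_support_append_iff] at h9
            rcases h9 with h9 | h9
            · left; rwa [SimpleGraph.Walk.support_reverse, List.mem_reverse] at h9
            · right; exact h9
          have hPnotnil : ¬ P.reverse.Nil := by
            rw [SimpleGraph.Walk.nil_iff_length_eq, SimpleGraph.Walk.length_reverse]
            intro h0
            exact hkj (SimpleGraph.Walk.eq_of_length_eq_zero h0)
          obtain ⟨x, hjx, q, hq⟩ := SimpleGraph.Walk.not_nil_iff.mp hPnotnil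
          have hxP : x ∈ P.support := by
            have h10 : x ∈ P.reverse.support := by
              rw [hq]
              simp [SimpleGraph.Walk.support_cons]
            rwa [SimpleGraph.Walk.support_reverse, List.mem_reverse] at h10
          have hjq : j ∉ (p x).support := by
            rcases hPsupp x hxP with hxk | hxj'
            · have hjk : j ∉ (p k).support := by
                intro hjk
                exact absurd (hmax k hkS) (Nat.not_le.mpr (hLlt k j hjk (Ne.symm hkj)))
              intro hcontra
              apply hjk
              rw [htake k x hxk] at hcontra
              exact SimpleGraph.Walk.support_takeUntil_subset _ _ hcontra
            · have hxj'' : x ≠ j := hjx.ne'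
              intro hcontra
              have h11 : L j < L x := hLlt x j hcontra (Ne.symm hxj'')
              have h12 : L x < L j := hLlt j x hxj' hxj''
              omega
          have hxi : x = i := hlast j i x hij hjx.symm hconcat hjq
          exact hri k j P hPpath v hvk hvj i (hxi ▸ hxP)
        have hai : (a : Fin n) ∈ J i := claim a k hkS' hak a.2
        have hbi : (b : Fin n) ∈ J i := claim b k' hk'S' hbk' b.2
        calc ⟪f' (a : Fin n), f' (b : Fin n)⟫
            = X i ⟨a, hai⟩ ⟨b, hbi⟩ := hf' i hiS' a b hai hbi
          _ = X j ⟨a, a.2⟩ ⟨b, b.2⟩ := hagree i j hij a b hai hbi a.2 b.2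
          _ = X j a b := by simp
      obtain ⟨h, hhgram, hht⟩ :=
        gram_extend hcardJ (X j) (hXpsd j) t (fun a => f' (a : Fin n)) hgram
      refine ⟨fun v => if hv : v ∈ J j then h ⟨v, hv⟩ else f' v, ?_⟩
      intro k hkS u v hu hv
      rcases eq_or_ne k j with rfl | hkj
      · simp only [dif_pos hu, dif_pos hv]
        exact hhgram ⟨u, hu⟩ ⟨v, hv⟩
      · have hk' : k ∈ S' := Finset.mem_erase.mpr ⟨hkj, hkS⟩
        have key : ∀ (uu : Fin n), uu ∈ J k →
            (if huu : uu ∈ J j then h ⟨uu, huu⟩ else f' uu) = f' uu := by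
          intro uu huu
          split_ifs with h1
          · have hmem : (⟨uu, h1⟩ : ↥(J j)) ∈ t := by
              rw [htdef]
              simp only [Finset.mem_filter, Finset.mem_univ, true_and]
              exact ⟨k, hk', huu⟩
            exact hht _ hmem
          · rfl
        simp only [key u hu, key v hv]
        exact hf' k hk' u v hu hv
  obtain ⟨f, hf⟩ := main (Finset.univ.card) Finset.univ le_rfl
    (fun k _ x _ => Finset.mem_univ x)
  set U : Matrix (Fin n) (Fin ω) ℝ := Matrix.of (fun v i => f v i) with hUdef
  have hentry : ∀ u v : Fin n, (U * Uᵀ) u v = ⟪f u, f v⟫ := by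
    intro u v
    simp [hUdef, Matrix.mul_apply, Matrix.transpose_apply, PiLp.inner_apply,
      RCLike.inner_apply, conj_trivial]
    exact Finset.sum_congr rfl fun _ _ => mul_comm _ _
  refine ⟨U, ?_, ?_⟩
  · have hT' : Uᵀ = Uᴴ := (Matrix.conjTranspose_eq_transpose_of_trivial _).symm
    rw [hT']
    exact Matrix.posSemidef_self_mul_conjTranspose _
  · intro j
    ext a b
    show (U * Uᵀ) (a : Fin n) (b : Fin n) = X j a b
    rw [hentry]
    have := hf j (Finset.mem_univ j) a b a.2 b.2
    simpa using this
end
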